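/- Let ℓ ≥ 1, let U be a real 2ℓ×ℓ matrix, and let M be a real symmetric ℓ×ℓ matrix. If there exists a real symmetric positive semidefinite 2ℓ×2ℓ matrix Y with UᵀYU = M, Y_{1:ℓ,1:ℓ} = I_ℓ and Y_{ℓ+1:2ℓ,ℓ+1:2ℓ} = I_ℓ, then there exists such a matrix Y whose rank is at most ⌊(√(12ℓ(ℓ+1)+1) − 1)/2⌋. -/

import Mathlib

open Matrix

noncomputable section

/-- Feasibility predicate: `Y` is a symmetric PSD `2ℓ×2ℓ` real matrix with `UᵀYU = M` and both
`ℓ×ℓ` diagonal blocks equal to the identity. -/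
def phiFeas (l : ℕ) (U : Matrix (Fin (2*l)) (Fin l) ℝ)
    (M : Matrix (Fin l) (Fin l) ℝ)
    (Y : Matrix (Fin (2*l)) (Fin (2*l)) ℝ) : Prop :=
  Y.PosSemidef ∧ Uᵀ * Y * U = M ∧
  (∀ i j : Fin l, Y ⟨(i : ℕ), by omega⟩ ⟨(j : ℕ), by omega⟩ = if i = j then (1:ℝ) else 0) ∧
  (∀ i j : Fin l, Y ⟨l + (i : ℕ), by omega⟩ ⟨l + (j : ℕ), by omega⟩ = if i = j then (1:ℝ) else 0)

set_option maxHeartbeats 1000000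

set_option linter.unusedSectionVars false


section CoreSec
variable {m : Type*} [Fintype m] [DecidableEq m]

def symE (s : Type*) [Fintype s] [LinearOrder s] :
    ({p : s × s // p.1 ≤ p.2} → ℝ) →ₗ[ℝ] Matrix s s ℝ where
  toFun c := Matrix.of fun i j =>
    if h : i ≤ j then c ⟨(i, j), h⟩ else c ⟨(j, i), le_of_not_ge h⟩
  map_add' c c' := by
    ext i j
    by_cases h : i ≤ j <;> simp [h]
  map_smul' t c := by
    ext i j
    by_cases h : i ≤ j <;> simp [h]

lemma symE_symm {s : Type*} [Fintype s] [LinearOrder s] (c : {p : s × s // p.1 ≤ p.2} → ℝ) :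
    (symE s c)ᵀ = symE s c := by
  ext i j
  show symE s c j i = symE s c i j
  by_cases h1 : i ≤ j <;> by_cases h2 : j ≤ i <;> simp only [symE, LinearMap.coe_mk,
    AddHom.coe_mk, Matrix.of_apply, h1, h2, dite_true, dite_false, dif_pos, dif_neg]
  · have : i = j := le_antisymm h1 h2
    subst this; rfl
  · exact absurd (le_total i j) (by tauto)

lemma symE_ne_zero {s : Type*} [Fintype s] [LinearOrder s]
    {c : {p : s × s // p.1 ≤ p.2} → ℝ} (hc : c ≠ 0) : symE s c ≠ 0 := by
  intro h
  apply hc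
  funext p
  have := congrFun (congrFun h p.1.1) p.1.2
  simpa [symE, p.2] using this

lemma card_le_pairs (α : Type*) [Fintype α] [LinearOrder α] :
    2 * Fintype.card {p : α × α // p.1 ≤ p.2}
      = Fintype.card α * (Fintype.card α + 1) := by
  classical
  have e1 : Fintype.card {p : α × α // p.1 ≤ p.2} + Fintype.card {p : α × α // ¬ p.1 ≤ p.2}
      = Fintype.card α * Fintype.card α := by
    rw [← Fintype.card_sum, Fintype.card_congr (Equiv.sumCompl _), Fintype.card_prod]
  have e2 : Fintype.card {p : α × α // ¬ p.1 ≤ p.2} = Fintype.card {p : α × α // p.1 < p.2} := by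
    refine Fintype.card_congr ⟨fun x => ⟨(x.1.2, x.1.1), lt_of_not_ge x.2⟩,
      fun x => ⟨(x.1.2, x.1.1), not_le_of_gt x.2⟩, fun x => ?_, fun x => ?_⟩ <;>
      (apply Subtype.ext; simp)
  have e3 : Fintype.card {p : α × α // p.1 ≤ p.2}
      = Fintype.card {p : α × α // p.1 < p.2} + Fintype.card α := by
    rw [← Fintype.card_sum]
    refine Fintype.card_congr ⟨fun x => if h : x.1.1 < x.1.2 then Sum.inl ⟨x.1, h⟩ else
        Sum.inr x.1.1, fun y => y.elim (fun p => ⟨p.1, le_of_lt p.2⟩) (fun a => ⟨(a, a), le_rfl⟩),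
        fun x => ?_, fun y => ?_⟩
    · by_cases h : x.1.1 < x.1.2
      · simp [h]
      · have : x.1.1 = x.1.2 := le_antisymm x.2 (not_lt.mp h)
        apply Subtype.ext
        simp [h, Prod.ext_iff, this]
    · rcases y with p | a
      · simp [p.2]
      · simp
  have e4 : Fintype.card α * (Fintype.card α + 1)
      = Fintype.card α * Fintype.card α + Fintype.card α := by ring
  rw [e4]
  omega

lemma psd_decomp (Y : Matrix m m ℝ) (hY : Y.PosSemidef) :
    ∃ W : Matrix m {i // hY.1.eigenvalues i ≠ 0} ℝ, W * Wᵀ = Y := by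
  set lam := hY.1.eigenvalues with hlam
  set Q : Matrix m m ℝ := (hY.1.eigenvectorUnitary : Matrix m m ℝ) with hQ
  refine ⟨Matrix.of fun i j => Q i j.1 * Real.sqrt (lam j.1), ?_⟩
  have hspec : Y = Q * diagonal lam * Qᴴ := by
    have := hY.1.spectral_theorem
    simpa [← hQ, ← hlam, Matrix.star_eq_conjTranspose] using this
  ext i k
  rw [hspec]
  simp only [Matrix.mul_apply, transpose_apply, Matrix.of_apply, conjTranspose_apply,
    diagonal_apply, star_trivial, mul_ite, mul_zero, Finset.sum_ite_eq, Finset.sum_ite_eq',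
    Finset.mem_univ, if_true]
  have key : ∀ x : m, lam x ≠ 0 →
      Q i x * Real.sqrt (lam x) * (Q k x * Real.sqrt (lam x)) = Q i x * lam x * Q k x := by
    intro x _
    have h0 : Real.sqrt (lam x) * Real.sqrt (lam x) = lam x :=
      Real.mul_self_sqrt (hY.eigenvalues_nonneg x)
    rw [show Q i x * Real.sqrt (lam x) * (Q k x * Real.sqrt (lam x))
        = Q i x * (Real.sqrt (lam x) * Real.sqrt (lam x)) * Q k x from by ring, h0]
  rw [← Finset.sum_subtype (Finset.univ.filter (fun x => lam x ≠ 0)) (by simp)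
    (fun x => Q i x * Real.sqrt (lam x) * (Q k x * Real.sqrt (lam x))),
    Finset.sum_filter_of_ne (by
      intro x _ hx
      intro h0
      simp [h0] at hx)]
  exact Finset.sum_congr rfl fun x _ => by
    by_cases hx : lam x = 0
    · simp [hx]
    · exact key x hx

lemma diag_conj_rank_lt {s : Type*} [Fintype s] [DecidableEq s] (P : Matrix s s ℝ) (w : s → ℝ)
    (i₀ : s) (hwi₀ : w i₀ = 0) : (P * diagonal w * Pᴴ).rank < Fintype.card s := by
  classical
  have r1a : (P * (diagonal w * Pᴴ)).rank ≤ (diagonal w * Pᴴ).rank := rank_mul_le_right _ _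
  have r1b : (diagonal w * Pᴴ).rank ≤ (diagonal w).rank := rank_mul_le_left _ _
  rw [← Matrix.mul_assoc] at r1a
  have r2 : (diagonal w).rank = Fintype.card {i // w i ≠ 0} := rank_diagonal w
  have r3 : Fintype.card {i // w i ≠ 0} ≤ Fintype.card {i // ¬ (i = i₀)} :=
    Fintype.card_subtype_mono _ _ fun i hi => by rintro rfl; exact hi hwi₀
  have r4 : Fintype.card {i // ¬ (i = i₀)} = Fintype.card s - 1 := by
    rw [Fintype.card_subtype_compl, Fintype.card_subtype_eq]
  have hs : 1 ≤ Fintype.card s := Fintype.card_pos_iff.mpr ⟨i₀⟩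
  omega

lemma rank_reduce_aux {s : Type*} [Fintype s] [DecidableEq s] [LinearOrder s]
    {ι : Type*} [Fintype ι]
    (G : Matrix m m ℝ →ₗ[ℝ] ι → ℝ) (Y : Matrix m m ℝ)
    (W : Matrix m s ℝ) (hW : W * Wᵀ = Y) (hcard : Fintype.card s = Y.rank)
    (hbig : Fintype.card ι * 2 < Y.rank * (Y.rank + 1)) :
    ∃ D : Matrix m m ℝ, D.IsSymm ∧ G D = 0 ∧ (Y + D).PosSemidef ∧ (Y + D).rank < Y.rank := by
  classical
  set L : Matrix s s ℝ →ₗ[ℝ] Matrix m m ℝ :=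
    { toFun := fun A => W * A * Wᵀ
      map_add' := fun A B => by simp [Matrix.mul_add, Matrix.add_mul]
      map_smul' := fun t A => by
        simp [Matrix.mul_smul, Matrix.smul_mul] } with hL
  set Φ : ({p : s × s // p.1 ≤ p.2} → ℝ) →ₗ[ℝ] ι → ℝ := G ∘ₗ L ∘ₗ symE s with hΦ
  have hnotinj : ¬ Function.Injective Φ := by
    intro hinj
    have h1 := LinearMap.finrank_le_finrank_of_injective hinj
    rw [Module.finrank_pi ℝ, Module.finrank_pi ℝ] at h1
    have h2 := card_le_pairs s
    rw [hcard] at h2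
    omega
  obtain ⟨x, y, hxy, hne⟩ := Function.not_injective_iff.mp hnotinj
  set c := x - y with hc
  have hc0 : c ≠ 0 := sub_ne_zero.mpr hne
  have hΦc : Φ c = 0 := by rw [hc, map_sub, hxy, sub_self]
  set Δ : Matrix s s ℝ := symE s c with hΔdef
  have hΔ0 : Δ ≠ 0 := symE_ne_zero hc0
  have hΔH : Δ.IsHermitian := by
    rw [Matrix.IsHermitian, conjTranspose_eq_transpose_of_trivial, hΔdef, symE_symm]
  set d := hΔH.eigenvalues with hd
  set P : Matrix s s ℝ := (hΔH.eigenvectorUnitary : Matrix s s ℝ) with hP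
  have hPP : P * Pᴴ = 1 := by
    rw [← Matrix.star_eq_conjTranspose]
    exact Matrix.mem_unitaryGroup_iff.mp hΔH.eigenvectorUnitary.2
  have hspec : Δ = P * diagonal d * Pᴴ := by
    have := hΔH.spectral_theorem
    simpa [← hP, ← hd, Matrix.star_eq_conjTranspose] using this
  have hrpos : 1 ≤ Fintype.card s := by
    rw [hcard]
    rcases Nat.eq_zero_or_pos Y.rank with h | h
    · rw [h] at hbig; simp at hbig
    · exact h
  have : Nonempty s := Fintype.card_pos_iff.mp hrpos
  obtain ⟨i₀, -, hmax⟩ := Finset.exists_max_image Finset.univ (fun i => |d i|)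
    Finset.univ_nonempty
  have hd0 : d i₀ ≠ 0 := by
    intro h0
    apply hΔ0
    have hdz : d = 0 := by
      funext i
      have := hmax i (Finset.mem_univ i)
      rw [h0, abs_zero] at this
      exact abs_nonpos_iff.mp this
    rw [hspec, hdz, show (diagonal (0 : s → ℝ)) = 0 from by ext i j; simp [diagonal_apply]]
    simp
  set t : ℝ := -(d i₀)⁻¹ with ht
  set w : s → ℝ := fun i => 1 + t * d i with hw
  have hwnn : ∀ i, 0 ≤ w i := by
    intro i
    have h1 : d i / d i₀ ≤ 1 := by
      refine le_trans (le_abs_self _) ?_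
      rw [abs_div]
      exact div_le_one_of_le₀ (hmax i (Finset.mem_univ i)) (abs_nonneg _)
    have h2 : w i = 1 - d i / d i₀ := by
      simp only [hw, ht, div_eq_mul_inv]; ring
    rw [h2]; linarith
  have hwi₀ : w i₀ = 0 := by
    simp only [hw, ht, neg_mul, inv_mul_cancel₀ hd0]; ring
  set N : Matrix s s ℝ := P * diagonal w * Pᴴ with hN
  have hNpsd : N.PosSemidef := (posSemidef_diagonal_iff.mpr hwnn).mul_mul_conjTranspose_same P
  have hNrank : N.rank < Fintype.card s := diag_conj_rank_lt P w i₀ hwi₀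
  have hNdec : N = 1 + t • Δ := by
    have hdiag : diagonal w = 1 + t • diagonal d := by
      ext i j
      by_cases hij : i = j
      · subst hij
        simp [hw, Matrix.one_apply, diagonal_apply]
      · simp [hij, diagonal_apply_ne, Matrix.one_apply_ne]
    rw [hN, hdiag, Matrix.mul_add, Matrix.add_mul, Matrix.mul_one, hPP,
      Matrix.mul_smul, Matrix.smul_mul, ← hspec]
  have hYD : Y + t • (W * Δ * Wᵀ) = W * N * Wᵀ := by
    rw [hNdec, Matrix.mul_add, Matrix.add_mul, Matrix.mul_one, hW,
      Matrix.mul_smul, Matrix.smul_mul]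
  refine ⟨t • (W * Δ * Wᵀ), ?_, ?_, ?_, ?_⟩
  · rw [Matrix.IsSymm, transpose_smul, Matrix.transpose_mul, Matrix.transpose_mul,
      transpose_transpose, ← Matrix.mul_assoc, hΔdef, symE_symm]
  · have h0 : G (W * Δ * Wᵀ) = 0 := hΦc
    rw [_root_.map_smul, h0, smul_zero]
  · rw [hYD, show Wᵀ = Wᴴ from (conjTranspose_eq_transpose_of_trivial W).symm]
    exact hNpsd.mul_mul_conjTranspose_same W
  · rw [hYD, ← hcard]
    have ra : (W * (N * Wᵀ)).rank ≤ (N * Wᵀ).rank := rank_mul_le_right _ _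
    have rb : (N * Wᵀ).rank ≤ N.rank := rank_mul_le_left _ _
    rw [← Matrix.mul_assoc] at ra
    omega

lemma rank_reduce [LinearOrder m] {ι : Type*} [Fintype ι]
    (G : Matrix m m ℝ →ₗ[ℝ] ι → ℝ) (Y : Matrix m m ℝ) (hY : Y.PosSemidef)
    (hbig : Fintype.card ι * 2 < Y.rank * (Y.rank + 1)) :
    ∃ D : Matrix m m ℝ, D.IsSymm ∧ G D = 0 ∧ (Y + D).PosSemidef ∧ (Y + D).rank < Y.rank := by
  obtain ⟨W, hW⟩ := psd_decomp Y hY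
  exact rank_reduce_aux G Y W hW (hY.1.rank_eq_card_non_zero_eigs).symm hbig

end CoreSec


section App
variable (l : ℕ) (U : Matrix (Fin (2*l)) (Fin l) ℝ)

variable (l : ℕ) (U : Matrix (Fin (2*l)) (Fin l) ℝ)

def emb1 (i : Fin l) : Fin (2*l) := ⟨(i : ℕ), by omega⟩
def emb2 (i : Fin l) : Fin (2*l) := ⟨l + (i : ℕ), by omega⟩

def constrMap : Matrix (Fin (2*l)) (Fin (2*l)) ℝ →ₗ[ℝ]
    (Fin 3 × {p : Fin l × Fin l // p.1 ≤ p.2}) → ℝ where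
  toFun Z k :=
    if k.1 = 0 then (Uᵀ * Z * U) k.2.1.1 k.2.1.2
    else if k.1 = 1 then Z (emb1 l k.2.1.1) (emb1 l k.2.1.2)
    else Z (emb2 l k.2.1.1) (emb2 l k.2.1.2)
  map_add' Z Z' := by
    funext k
    by_cases h0 : k.1 = 0 <;> by_cases h1 : k.1 = 1 <;>
      simp [h0, h1, Matrix.mul_add, Matrix.add_mul]
  map_smul' t Z := by
    funext k
    by_cases h0 : k.1 = 0 <;> by_cases h1 : k.1 = 1 <;>
      simp [h0, h1, Matrix.mul_smul, Matrix.smul_mul]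

lemma constrMap_zero {D : Matrix (Fin (2*l)) (Fin (2*l)) ℝ} (hs : D.IsSymm)
    (h : constrMap l U D = 0) :
    Uᵀ * D * U = 0 ∧ (∀ i j : Fin l, D (emb1 l i) (emb1 l j) = 0) ∧
      (∀ i j : Fin l, D (emb2 l i) (emb2 l j) = 0) := by
  have hDsym : ∀ a b, D a b = D b a := fun a b => congrFun (congrFun hs.eq b) a
  have key : ∀ (i j : Fin l), i ≤ j → (Uᵀ * D * U) i j = 0 ∧
      D (emb1 l i) (emb1 l j) = 0 ∧ D (emb2 l i) (emb2 l j) = 0 := by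
    intro i j hij
    refine ⟨congrFun h (0, ⟨(i,j), hij⟩), congrFun h (1, ⟨(i,j), hij⟩),
      congrFun h (2, ⟨(i,j), hij⟩)⟩
  have hUDU : (Uᵀ * D * U)ᵀ = Uᵀ * D * U := by
    rw [Matrix.transpose_mul, Matrix.transpose_mul, transpose_transpose, hs.eq,
      ← Matrix.mul_assoc]
  refine ⟨?_, ?_, ?_⟩
  · ext i j
    rcases le_total i j with hij | hij
    · simpa using (key i j hij).1
    · have := (key j i hij).1
      rw [show (0:Matrix (Fin l) (Fin l) ℝ) i j = (0:ℝ) from rfl]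
      calc (Uᵀ * D * U) i j = (Uᵀ * D * U)ᵀ j i := rfl
        _ = (Uᵀ * D * U) j i := by rw [hUDU]
        _ = 0 := this
  · intro i j
    rcases le_total i j with hij | hij
    · exact (key i j hij).2.1
    · rw [hDsym]; exact (key j i hij).2.1
  · intro i j
    rcases le_total i j with hij | hij
    · exact (key i j hij).2.2
    · rw [hDsym]; exact (key j i hij).2.2


lemma phiFeas_step (M : Matrix (Fin l) (Fin l) ℝ) {Y : Matrix (Fin (2*l)) (Fin (2*l)) ℝ}
    (hY : phiFeas l U M Y) (hbig : ¬ (Y.rank * (Y.rank + 1) ≤ 3 * (l * (l + 1)))) :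
    ∃ Z, phiFeas l U M Z ∧ Z.rank < Y.rank := by
  have hcard : Fintype.card (Fin 3 × {p : Fin l × Fin l // p.1 ≤ p.2}) * 2 = 3 * (l * (l+1)) := by
    rw [Fintype.card_prod, Fintype.card_fin]
    have h2 := card_le_pairs (Fin l)
    rw [Fintype.card_fin] at h2
    omega
  have hbig' : Fintype.card (Fin 3 × {p : Fin l × Fin l // p.1 ≤ p.2}) * 2
      < Y.rank * (Y.rank + 1) := by omega
  obtain ⟨D, hDsym, hDzero, hpsd, hlt⟩ := rank_reduce (constrMap l U) Y hY.1 hbig'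
  obtain ⟨hz1, hz2, hz3⟩ := constrMap_zero l U hDsym hDzero
  refine ⟨Y + D, ⟨hpsd, ?_, ?_, ?_⟩, hlt⟩
  · rw [Matrix.mul_add, Matrix.add_mul, hz1, add_zero]
    exact hY.2.1
  · intro i j
    show Y (emb1 l i) (emb1 l j) + D (emb1 l i) (emb1 l j) = _
    rw [hz2 i j, add_zero]
    exact hY.2.2.1 i j
  · intro i j
    show Y (emb2 l i) (emb2 l j) + D (emb2 l i) (emb2 l j) = _
    rw [hz3 i j, add_zero]
    exact hY.2.2.2 i j

lemma phiFeas_low (M : Matrix (Fin l) (Fin l) ℝ) (h : ∃ Y, phiFeas l U M Y) :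
    ∃ Y, phiFeas l U M Y ∧ Y.rank * (Y.rank + 1) ≤ 3 * (l * (l + 1)) := by
  obtain ⟨Y, hY⟩ := h
  suffices H : ∀ r (Y : Matrix (Fin (2*l)) (Fin (2*l)) ℝ), phiFeas l U M Y → Y.rank ≤ r →
      ∃ Z, phiFeas l U M Z ∧ Z.rank * (Z.rank + 1) ≤ 3 * (l * (l + 1)) from
    H Y.rank Y hY le_rfl
  intro r
  induction r with
  | zero =>
    intro Y hY hr
    refine ⟨Y, hY, ?_⟩
    rw [Nat.le_zero.mp hr]
    simp
  | succ n ih =>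
    intro Y hY hr
    by_cases hb : Y.rank * (Y.rank + 1) ≤ 3 * (l * (l + 1))
    · exact ⟨Y, hY, hb⟩
    · obtain ⟨Z, hZ, hlt⟩ := phiFeas_step l U M hY hb
      exact ih Z hZ (by omega)

end App

/-- If the feasible set is nonempty, it contains an element of rank at most
`⌊(√(12ℓ(ℓ+1)+1) − 1)/2⌋`. -/
theorem phiFeas_exists_low_rank (l : ℕ) (hl : 1 ≤ l)
    (U : Matrix (Fin (2*l)) (Fin l) ℝ)
    (M : Matrix (Fin l) (Fin l) ℝ) (hM : M.IsSymm)
    (h : ∃ Y, phiFeas l U M Y) :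
    ∃ Y, phiFeas l U M Y ∧
      (Y.rank : ℤ) ≤ ⌊(Real.sqrt (12 * (l : ℝ) * ((l : ℝ) + 1) + 1) - 1) / 2⌋ := by
  obtain ⟨Y, hY, hbound⟩ := phiFeas_low l U M h
  refine ⟨Y, hY, ?_⟩
  rw [Int.le_floor]
  have hcast : ((Y.rank : ℝ)) * ((Y.rank : ℝ) + 1) ≤ 3 * ((l : ℝ) * ((l : ℝ) + 1)) := by
    exact_mod_cast hbound
  have h1 : (2 * (Y.rank : ℝ) + 1) ^ 2 ≤ 12 * (l : ℝ) * ((l : ℝ) + 1) + 1 := by nlinarith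
  have h2 : 2 * (Y.rank : ℝ) + 1 ≤ Real.sqrt (12 * (l : ℝ) * ((l : ℝ) + 1) + 1) := by
    rw [Real.le_sqrt (by positivity)]
    · exact h1
    · positivity
  push_cast
  linarith
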